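/- In the asymptotic Bernoulli setting, assume m(n)·p(n)/log n → 0 as n → ∞ (sparse regime) and that log( log n / (m·p) ) / log n → 0. Let X_1, …, X_n be i.i.d. Binomial(m,p), and set g_n := log n / log( log n / (m·p) ). Then there exist constants c₁, c₂ > 0 such that for all sufficiently large n, c₁·g_n ≤ E[ max_{i∈[n]} X_i ] ≤ c₂·g_n. -/

import Mathlib

open Classical Finset

/-- Probability weight of `n` independent rows of `m` i.i.d. Bernoulli(p) trials;
row `i` realizes the Binomial(m,p) variable `X i`. -/
noncomputable def bWeight (n m : ℕ) (p : ℝ) (ω : Fin n → Fin m → Bool) : ℝ :=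
  ∏ i : Fin n, ∏ j : Fin m, if ω i j then p else 1 - p

/-- Probability of an event for `n` i.i.d. Binomial(m,p) variables. -/
noncomputable def bProb (n m : ℕ) (p : ℝ) (P : (Fin n → Fin m → Bool) → Prop) : ℝ :=
  ∑ ω : Fin n → Fin m → Bool, if P ω then bWeight n m p ω else 0

/-- `X i`: the `i`-th Binomial(m,p) variable (number of successes in row `i`). -/
def Xvar {n m : ℕ} (ω : Fin n → Fin m → Bool) (i : Fin n) : ℕ :=
  (Finset.univ.filter fun j : Fin m => ω i j = true).card

/-- `max_{i ∈ [n]} X_i`. -/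
def maxX {n m : ℕ} (ω : Fin n → Fin m → Bool) : ℕ :=
  Finset.univ.sup (Xvar ω)

/-- `E[max_{i ∈ [n]} X_i]` for `n` i.i.d. Binomial(m,p) variables. -/
noncomputable def expMax (n m : ℕ) (p : ℝ) : ℝ :=
  ∑ ω : Fin n → Fin m → Bool, bWeight n m p ω * (maxX ω : ℝ)


namespace Stmt10P



/-- row weight -/
noncomputable def rowWeight (m : ℕ) (p : ℝ) (f : Fin m → Bool) : ℝ :=
  ∏ j : Fin m, if f j then p else 1 - p

noncomputable def rProb (m : ℕ) (p : ℝ) (Q : (Fin m → Bool) → Prop) : ℝ :=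
  ∑ f : Fin m → Bool, if Q f then rowWeight m p f else 0

def Xrow {m : ℕ} (f : Fin m → Bool) : ℕ := (Finset.univ.filter fun j => f j = true).card

variable {m n : ℕ} {p : ℝ}

lemma sum_prod_eq {ι κ : Type*} [Fintype ι] [Fintype κ] [DecidableEq ι] (h : ι → κ → ℝ) :
    ∑ ω : ι → κ, ∏ i, h i (ω i) = ∏ i, ∑ b, h i b := by
  rw [Finset.prod_univ_sum]
  rw [← Fintype.piFinset_univ]

lemma rowWeight_nonneg (hp0 : 0 ≤ p) (hp1 : p ≤ 1) (f : Fin m → Bool) :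
    0 ≤ rowWeight m p f := by
  refine Finset.prod_nonneg fun j _ => ?_
  split <;> linarith

lemma sum_rowWeight (m : ℕ) (p : ℝ) : ∑ f : Fin m → Bool, rowWeight m p f = 1 := by
  have h := sum_prod_eq (fun (_ : Fin m) (b : Bool) => if b then p else 1 - p)
  unfold rowWeight
  rw [h]
  rw [Finset.prod_eq_one]
  intro i _
  simp

lemma rProb_nonneg (hp0 : 0 ≤ p) (hp1 : p ≤ 1) (Q : (Fin m → Bool) → Prop) :
    0 ≤ rProb m p Q := by
  refine Finset.sum_nonneg fun f _ => ?_
  split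
  · exact rowWeight_nonneg hp0 hp1 f
  · exact le_rfl

lemma rProb_mono (hp0 : 0 ≤ p) (hp1 : p ≤ 1) {Q R : (Fin m → Bool) → Prop}
    (h : ∀ f, Q f → R f) : rProb m p Q ≤ rProb m p R := by
  refine Finset.sum_le_sum fun f _ => ?_
  by_cases hq : Q f
  · simp [hq, h f hq]
  · simp only [hq, if_false]
    split
    · exact rowWeight_nonneg hp0 hp1 f
    · exact le_rfl

lemma rProb_le_one (hp0 : 0 ≤ p) (hp1 : p ≤ 1) (Q : (Fin m → Bool) → Prop) :
    rProb m p Q ≤ 1 := by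
  calc rProb m p Q ≤ ∑ f : Fin m → Bool, rowWeight m p f := by
        refine Finset.sum_le_sum fun f _ => ?_
        split
        · exact le_rfl
        · exact rowWeight_nonneg hp0 hp1 f
    _ = 1 := sum_rowWeight m p

lemma rProb_add_compl (Q : (Fin m → Bool) → Prop) :
    rProb m p Q + rProb m p (fun f => ¬ Q f) = 1 := by
  rw [← sum_rowWeight m p, rProb, rProb, ← Finset.sum_add_distrib]
  refine Finset.sum_congr rfl fun f _ => ?_
  by_cases hq : Q f <;> simp [hq]

lemma Xrow_le (f : Fin m → Bool) : Xrow f ≤ m :=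
  le_trans (Finset.card_filter_le _ _) (by simp)

lemma rowWeight_eq (f : Fin m → Bool) :
    rowWeight m p f = p ^ (Xrow f) * (1 - p) ^ (m - Xrow f) := by
  unfold rowWeight Xrow
  rw [← Finset.prod_filter_mul_prod_filter_not Finset.univ (fun j => f j = true)]
  congr 1
  · rw [Finset.prod_congr rfl (fun j hj => ?_), Finset.prod_const]
    rw [Finset.mem_filter] at hj
    simp [hj.2]
  · rw [Finset.prod_congr rfl (fun j hj => ?_), Finset.prod_const]
    · congr 1
      have := Finset.card_filter_add_card_filter_not (s := (Finset.univ : Finset (Fin m)))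
        (p := fun j => f j = true)
      simp only [Finset.card_univ, Fintype.card_fin] at this
      omega
    · rw [Finset.mem_filter] at hj
      simp [hj.2]

lemma card_Xrow_eq (m k : ℕ) :
    ((Finset.univ : Finset (Fin m → Bool)).filter fun f => Xrow f = k).card = m.choose k := by
  have hpc : (Finset.powersetCard k (Finset.univ : Finset (Fin m))).card = m.choose k := by
    rw [Finset.card_powersetCard]; simp
  rw [← hpc]
  · refine Finset.card_bij' (fun f _ => Finset.univ.filter fun j => f j = true)
      (fun S _ => fun j => decide (j ∈ S)) ?_ ?_ ?_ ?_
    · intro f hf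
      rw [Finset.mem_filter] at hf
      rw [Finset.mem_powersetCard]
      exact ⟨Finset.subset_univ _, hf.2⟩
    · intro S hS
      rw [Finset.mem_powersetCard] at hS
      rw [Finset.mem_filter]
      refine ⟨Finset.mem_univ _, ?_⟩
      have : Xrow ((fun j => decide (j ∈ S)) : Fin m → Bool) = S.card := by
        unfold Xrow
        congr 1
        ext j
        simp
      rw [this, hS.2]
    · intro f hf
      funext j
      simp
    · intro S hS
      ext j
      simp

lemma rProb_eq_choose (m k : ℕ) (p : ℝ) :
    rProb m p (fun f => Xrow f = k) = (m.choose k : ℝ) * (p ^ k * (1 - p) ^ (m - k)) := by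
  have hrw : rProb m p (fun f => Xrow f = k)
      = ∑ f : Fin m → Bool, if Xrow f = k then rowWeight m p f else 0 := by
    unfold rProb
    refine Finset.sum_congr rfl fun f _ => ?_
    first | rfl | congr
  rw [hrw]
  calc (∑ f : Fin m → Bool, if Xrow f = k then rowWeight m p f else 0)
      = ∑ f : Fin m → Bool, (p ^ k * (1 - p) ^ (m - k)) * (if Xrow f = k then (1:ℝ) else 0) := by
        refine Finset.sum_congr rfl fun f _ => ?_
        by_cases hf : Xrow f = k
        · rw [if_pos hf, if_pos hf, rowWeight_eq, hf, mul_one]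
        · rw [if_neg hf, if_neg hf, mul_zero]
    _ = (p ^ k * (1 - p) ^ (m - k)) * ∑ f : Fin m → Bool, (if Xrow f = k then (1:ℝ) else 0) := by
        rw [← Finset.mul_sum]
    _ = (m.choose k : ℝ) * (p ^ k * (1 - p) ^ (m - k)) := by
        simp only [Finset.sum_boole]
        rw [mul_comm]
        congr 2
        rw [← card_Xrow_eq m k]
        try congr 1

lemma rProb_ge_eq_sum (m k : ℕ) (p : ℝ) :
    rProb m p (fun f => k ≤ Xrow f) =
      ∑ t ∈ Finset.Icc k m, rProb m p (fun f => Xrow f = t) := by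
  have h2 : ∀ t, rProb m p (fun f => Xrow f = t)
      = ∑ f : Fin m → Bool, if Xrow f = t then rowWeight m p f else 0 := by
    intro t
    unfold rProb
    refine Finset.sum_congr rfl fun f _ => ?_
    first | rfl | congr
  rw [Finset.sum_congr rfl (fun t (_ : t ∈ Finset.Icc k m) => h2 t)]
  have h3 : rProb m p (fun f => k ≤ Xrow f)
      = ∑ f : Fin m → Bool, if k ≤ Xrow f then rowWeight m p f else 0 := by
    unfold rProb
    refine Finset.sum_congr rfl fun f _ => ?_
    first | rfl | congr
  rw [h3, Finset.sum_comm]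
  refine Finset.sum_congr rfl fun f _ => ?_
  by_cases hk : k ≤ Xrow f
  · rw [if_pos hk]
    refine Eq.symm ((Finset.sum_eq_single_of_mem (Xrow f) (Finset.mem_Icc.mpr ⟨hk, Xrow_le f⟩)
      (fun t _ ht => if_neg (fun (h : Xrow f = t) => ht h.symm))).trans (if_pos rfl))
  · rw [if_neg hk]
    refine (Finset.sum_eq_zero fun t ht => ?_).symm
    rw [Finset.mem_Icc] at ht
    exact if_neg (fun (h : Xrow f = t) => hk (le_of_le_of_eq ht.1 h.symm))
lemma bWeight_eq_prod (ω : Fin n → Fin m → Bool) :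
    bWeight n m p ω = ∏ i, rowWeight m p (ω i) := rfl

lemma bWeight_nonneg (hp0 : 0 ≤ p) (hp1 : p ≤ 1) (ω : Fin n → Fin m → Bool) :
    0 ≤ bWeight n m p ω := by
  rw [bWeight_eq_prod]
  exact Finset.prod_nonneg fun i _ => rowWeight_nonneg hp0 hp1 _

lemma sum_bWeight (n m : ℕ) (p : ℝ) : ∑ ω : Fin n → Fin m → Bool, bWeight n m p ω = 1 := by
  have h := sum_prod_eq (fun (_ : Fin n) (f : Fin m → Bool) => rowWeight m p f)
  calc ∑ ω : Fin n → Fin m → Bool, bWeight n m p ω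
      = ∑ ω : Fin n → Fin m → Bool, ∏ i, rowWeight m p (ω i) := rfl
    _ = ∏ _i : Fin n, ∑ f : Fin m → Bool, rowWeight m p f := h
    _ = 1 := by rw [Finset.prod_congr rfl fun i _ => sum_rowWeight m p, Finset.prod_const_one]

lemma bProb_nonneg (hp0 : 0 ≤ p) (hp1 : p ≤ 1) (P : (Fin n → Fin m → Bool) → Prop) :
    0 ≤ bProb n m p P := by
  refine Finset.sum_nonneg fun ω _ => ?_
  split
  · exact bWeight_nonneg hp0 hp1 ω
  · exact le_rfl

lemma bProb_le_one (hp0 : 0 ≤ p) (hp1 : p ≤ 1) (P : (Fin n → Fin m → Bool) → Prop) :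
    bProb n m p P ≤ 1 := by
  calc bProb n m p P ≤ ∑ ω : Fin n → Fin m → Bool, bWeight n m p ω := by
        refine Finset.sum_le_sum fun ω _ => ?_
        split
        · exact le_rfl
        · exact bWeight_nonneg hp0 hp1 ω
    _ = 1 := sum_bWeight n m p

lemma bProb_congr {P Q : (Fin n → Fin m → Bool) → Prop} (h : ∀ ω, P ω ↔ Q ω) :
    bProb n m p P = bProb n m p Q := by
  unfold bProb
  refine Finset.sum_congr rfl fun ω _ => ?_
  by_cases hp : P ω
  · rw [if_pos hp, if_pos ((h ω).mp hp)]
  · rw [if_neg hp, if_neg (fun hq => hp ((h ω).mpr hq))]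

lemma bProb_add_compl (P : (Fin n → Fin m → Bool) → Prop) :
    bProb n m p P + bProb n m p (fun ω => ¬ P ω) = 1 := by
  rw [← sum_bWeight n m p]
  unfold bProb
  rw [← Finset.sum_add_distrib]
  refine Finset.sum_congr rfl fun ω _ => ?_
  by_cases hq : P ω <;> simp [hq]

lemma prob_forall_rows (Q : (Fin m → Bool) → Prop) :
    bProb n m p (fun ω => ∀ i, Q (ω i)) = (rProb m p Q) ^ n := by
  have h := sum_prod_eq (fun (_ : Fin n) (f : Fin m → Bool) =>
    if Q f then rowWeight m p f else 0)
  calc bProb n m p (fun ω => ∀ i, Q (ω i))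
      = ∑ ω : Fin n → Fin m → Bool, ∏ i, (if Q (ω i) then rowWeight m p (ω i) else 0) := by
        unfold bProb
        refine Finset.sum_congr rfl fun ω _ => ?_
        by_cases hall : ∀ i, Q (ω i)
        · rw [if_pos hall, bWeight_eq_prod]
          exact Finset.prod_congr rfl fun i _ => (if_pos (hall i)).symm
        · rw [if_neg hall]
          push_neg at hall
          obtain ⟨i0, hi0⟩ := hall
          refine (Finset.prod_eq_zero (Finset.mem_univ i0) ?_).symm
          exact if_neg hi0
    _ = ∏ _i : Fin n, ∑ f : Fin m → Bool, (if Q f then rowWeight m p f else 0) := h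
    _ = (rProb m p Q) ^ n := by
        rw [Finset.prod_const]
        congr 1
        simp
lemma maxX_le (ω : Fin n → Fin m → Bool) : maxX ω ≤ m :=
  Finset.sup_le fun i _ => Xrow_le (ω i)

lemma prob_max_ge (k : ℕ) (hk : 0 < k) :
    bProb n m p (fun ω => k ≤ maxX ω)
      = 1 - (rProb m p (fun f => Xrow f < k)) ^ n := by
  have hc : bProb n m p (fun ω => ¬ k ≤ maxX ω)
      = (rProb m p (fun f => Xrow f < k)) ^ n := by
    rw [← prob_forall_rows (fun f => Xrow f < k)]
    refine bProb_congr fun ω => ?_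
    rw [not_le]
    unfold maxX
    rw [Finset.sup_lt_iff (show ⊥ < k from hk)]
    constructor
    · intro h i
      exact h i (Finset.mem_univ i)
    · intro h i _
      exact h i
  have := bProb_add_compl (n := n) (m := m) (p := p) (fun ω => k ≤ maxX ω)
  rw [hc] at this
  linarith

lemma expMax_eq_sum_tail (n m : ℕ) (p : ℝ) :
    expMax n m p = ∑ k ∈ Finset.Icc 1 m, bProb n m p (fun ω => k ≤ maxX ω) := by
  unfold expMax bProb
  rw [Finset.sum_comm]
  refine Finset.sum_congr rfl fun ω _ => ?_
  have hcast : ((maxX ω : ℕ) : ℝ) = ∑ k ∈ Finset.Icc 1 m, (if k ≤ maxX ω then (1:ℝ) else 0) := by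
    rw [Finset.sum_boole]
    have : Finset.filter (fun k => k ≤ maxX ω) (Finset.Icc 1 m) = Finset.Icc 1 (maxX ω) := by
      ext k
      simp only [Finset.mem_filter, Finset.mem_Icc]
      have := maxX_le ω
      omega
    rw [this, Nat.card_Icc]
    simp
  rw [hcast, Finset.mul_sum]
  refine Finset.sum_congr rfl fun k _ => ?_
  by_cases hk : k ≤ maxX ω <;> simp [hk]

lemma le_expMax (hp0 : 0 ≤ p) (hp1 : p ≤ 1) (k : ℕ) :
    (k : ℝ) * bProb n m p (fun ω => k ≤ maxX ω) ≤ expMax n m p := by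
  unfold bProb expMax
  rw [Finset.mul_sum]
  refine Finset.sum_le_sum fun ω _ => ?_
  by_cases hk : k ≤ maxX ω
  · rw [if_pos hk]
    rw [mul_comm]
    exact mul_le_mul_of_nonneg_left (by exact_mod_cast hk) (bWeight_nonneg hp0 hp1 ω)
  · rw [if_neg hk, mul_zero]
    exact mul_nonneg (bWeight_nonneg hp0 hp1 ω) (by positivity)


lemma pow_self_le_four_pow_mul_factorial : ∀ k : ℕ, (k:ℝ)^k ≤ 4^k * (k.factorial : ℝ)
  | 0 => by norm_num
  | (k+1) => by
    have ih := pow_self_le_four_pow_mul_factorial k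
    rcases Nat.eq_zero_or_pos k with hk | hk
    · subst hk; norm_num
    have hkpos : (0:ℝ) < k := by exact_mod_cast hk
    have h1 : ((k:ℝ)+1)^k ≤ 4 * (k:ℝ)^k := by
      have heq : ((k:ℝ)+1) = (k:ℝ) * (1 + 1/k) := by field_simp
      rw [heq, mul_pow]
      have h2 : (1 + 1/(k:ℝ))^k ≤ Real.exp 1 := by
        have h3 : (1 + 1/(k:ℝ)) ≤ Real.exp (1/k) := by
          have := Real.add_one_le_exp (1/(k:ℝ))
          linarith
        calc (1 + 1/(k:ℝ))^k ≤ (Real.exp (1/k))^k := by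
              refine pow_le_pow_left₀ ?_ h3 k
              positivity
          _ = Real.exp 1 := by
              rw [← Real.exp_nat_mul]
              congr 1
              field_simp
      have h4 : Real.exp 1 ≤ 4 := by
        have := Real.exp_one_lt_d9
        linarith
      calc (k:ℝ)^k * (1 + 1/(k:ℝ))^k ≤ (k:ℝ)^k * 4 := by
            refine mul_le_mul_of_nonneg_left (h2.trans h4) (by positivity)
        _ = 4 * (k:ℝ)^k := by ring
    calc ((k+1:ℕ):ℝ)^(k+1) = ((k:ℝ)+1) * ((k:ℝ)+1)^k := by
          push_cast; ring
      _ ≤ ((k:ℝ)+1) * (4 * (k:ℝ)^k) := by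
          refine mul_le_mul_of_nonneg_left h1 (by positivity)
      _ ≤ ((k:ℝ)+1) * (4 * (4^k * (k.factorial : ℝ))) := by
          refine mul_le_mul_of_nonneg_left (by nlinarith [pow_pos (show (0:ℝ)<4 by norm_num) k]) (by positivity)
      _ = 4^(k+1) * (((k:ℝ)+1) * (k.factorial : ℝ)) := by ring
      _ = 4^(k+1) * ((k+1).factorial : ℝ) := by
          rw [Nat.factorial_succ]
          push_cast
          ring

lemma one_sub_pow_le (x : ℝ) (hx0 : 0 ≤ x) (hx1 : x ≤ 1) : ∀ n : ℕ, 1 - x^n ≤ n * (1 - x)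
  | 0 => by norm_num
  | (n+1) => by
    have ih := one_sub_pow_le x hx0 hx1 n
    have hxn : x^n ≤ 1 := pow_le_one₀ hx0 hx1
    have hxn0 : 0 ≤ x^n := pow_nonneg hx0 n
    calc 1 - x^(n+1) = (1 - x) + x * (1 - x^n) := by ring
      _ ≤ (1 - x) + 1 * (n * (1-x)) := by nlinarith
      _ = (n+1 : ℕ) * (1-x) := by push_cast; ring
  
lemma one_sub_le_exp_neg (x : ℝ) : 1 - x ≤ Real.exp (-x) := by
  have := Real.add_one_le_exp (-x)
  linarith

lemma exp_neg_two_le_one_sub (p : ℝ) (hp0 : 0 ≤ p) (hp : p ≤ 1/2) :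
    Real.exp (-(2*p)) ≤ 1 - p := by
  have h1 : 1 + 2*p ≤ Real.exp (2*p) := by
    have := Real.add_one_le_exp (2*p)
    linarith
  have h2 : Real.exp (-(2*p)) = 1 / Real.exp (2*p) := by
    rw [Real.exp_neg]; ring
  rw [h2]
  rw [div_le_iff₀ (Real.exp_pos _)]
  have h3 : (1-p) * (1 + 2*p) ≤ (1-p) * Real.exp (2*p) := by
    refine mul_le_mul_of_nonneg_left h1 (by linarith)
  nlinarith

lemma le_exp_half (L : ℝ) (hL : 16 ≤ L) : L ≤ Real.exp (L/2) := by
  have h1 : 1 + L/4 ≤ Real.exp (L/4) := by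
    have := Real.add_one_le_exp (L/4)
    linarith
  have h2 : Real.exp (L/2) = Real.exp (L/4) * Real.exp (L/4) := by
    rw [← Real.exp_add]; ring_nf
  rw [h2]
  nlinarith

lemma geom_tail_le (β : ℝ) (hβ0 : 0 ≤ β) (hβ : β ≤ 1/2) (K M : ℕ) :
    ∑ k ∈ Finset.Icc (K+1) M, β^k ≤ 2 * β^(K+1) := by
  have hstep : ∀ k ∈ Finset.Icc (K+1) M, β^k ≤ β^(K+1) * (1/2)^(k - (K+1)) := by
    intro k hk
    rw [Finset.mem_Icc] at hk
    calc β^k = β^(K+1) * β^(k - (K+1)) := by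
          rw [← pow_add]
          congr 1
          omega
      _ ≤ β^(K+1) * (1/2)^(k - (K+1)) := by
          refine mul_le_mul_of_nonneg_left ?_ (by positivity)
          exact pow_le_pow_left₀ hβ0 hβ _
  calc ∑ k ∈ Finset.Icc (K+1) M, β^k ≤ ∑ k ∈ Finset.Icc (K+1) M, β^(K+1) * (1/2)^(k - (K+1)) :=
        Finset.sum_le_sum hstep
    _ = β^(K+1) * ∑ k ∈ Finset.Icc (K+1) M, (1/2:ℝ)^(k - (K+1)) := by rw [Finset.mul_sum]
    _ ≤ β^(K+1) * 2 := by
        refine mul_le_mul_of_nonneg_left ?_ (by positivity)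
        have himg : ∑ k ∈ Finset.Icc (K+1) M, (1/2:ℝ)^(k - (K+1))
            ≤ ∑ j ∈ Finset.range (M+1), (1/2:ℝ)^j := by
          have hinj : ∀ x ∈ Finset.Icc (K+1) M, ∀ y ∈ Finset.Icc (K+1) M,
              x - (K+1) = y - (K+1) → x = y := by
            intro x hx y hy hxy
            rw [Finset.mem_Icc] at hx hy
            omega
          rw [← Finset.sum_image hinj]
          refine Finset.sum_le_sum_of_subset_of_nonneg ?_ ?_
          · intro j hj
            rw [Finset.mem_image] at hj
            obtain ⟨k, hk, rfl⟩ := hj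
            rw [Finset.mem_Icc] at hk
            rw [Finset.mem_range]
            omega
          · intro j _ _
            positivity
        refine himg.trans ?_
        have := geom_sum_eq (show (1/2:ℝ) ≠ 1 by norm_num) (M+1)
        rw [this]
        have hp : (0:ℝ) ≤ (1/2:ℝ)^(M+1) := by positivity
        rw [div_eq_mul_inv]
        nlinarith [pow_pos (show (0:ℝ) < 1/2 by norm_num) (M+1)]
    _ = 2 * β^(K+1) := by ring


lemma rProb_congr {m : ℕ} {p : ℝ} {Q R : (Fin m → Bool) → Prop} (h : ∀ f, Q f ↔ R f) :
    rProb m p Q = rProb m p R := by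
  unfold rProb
  refine Finset.sum_congr rfl fun f _ => ?_
  by_cases hq : Q f
  · rw [if_pos hq, if_pos ((h f).mp hq)]
  · rw [if_neg hq, if_neg (fun hr => hq ((h f).mpr hr))]

lemma choose_mul_le (mn s : ℕ) (p : ℝ) (hs : 1 ≤ s) (hp0 : 0 ≤ p) (hp1 : p ≤ 1) :
    (mn.choose s : ℝ) * (p ^ s * (1 - p) ^ (mn - s)) ≤ (4*((mn:ℝ)*p)/s)^s := by
  have hsp : (0:ℝ) < (s:ℝ) := by exact_mod_cast hs
  have hfacpos : (0:ℝ) < (s.factorial : ℝ) := by exact_mod_cast s.factorial_pos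
  have h1 : (1-p)^(mn-s) ≤ 1 := pow_le_one₀ (by linarith) (by linarith)
  have h1nn : (0:ℝ) ≤ (1-p)^(mn-s) := pow_nonneg (by linarith) _
  have hC : (mn.choose s : ℝ) ≤ (mn:ℝ)^s / s.factorial := Nat.choose_le_pow_div s mn
  have hCnn : (0:ℝ) ≤ (mn.choose s : ℝ) := by positivity
  have hpn : (0:ℝ) ≤ p^s := pow_nonneg hp0 s
  have key : ((mn:ℝ)^s / s.factorial) * p^s ≤ (4*((mn:ℝ)*p)/s)^s := by
    have hfac := pow_self_le_four_pow_mul_factorial s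
    have hrw : (4*((mn:ℝ)*p)/s)^s = (4^s * ((mn:ℝ)*p)^s) / (s:ℝ)^s := by
      rw [div_pow, mul_pow]
    rw [hrw]
    have hmn : (0:ℝ) ≤ ((mn:ℝ)*p)^s := by positivity
    rw [div_mul_eq_mul_div, div_le_div_iff₀ hfacpos (by positivity)]
    calc (mn:ℝ)^s * p^s * (s:ℝ)^s = ((mn:ℝ)*p)^s * (s:ℝ)^s := by rw [mul_pow]
      _ ≤ ((mn:ℝ)*p)^s * (4^s * s.factorial) := mul_le_mul_of_nonneg_left hfac hmn
      _ = 4^s * ((mn:ℝ)*p)^s * (s.factorial:ℝ) := by ring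
  calc (mn.choose s : ℝ) * (p ^ s * (1 - p) ^ (mn - s))
      ≤ (mn.choose s : ℝ) * p^s := by
        have := mul_le_mul_of_nonneg_left h1 (mul_nonneg hCnn hpn)
        calc (mn.choose s : ℝ) * (p ^ s * (1 - p) ^ (mn - s))
            = ((mn.choose s : ℝ) * p^s) * (1-p)^(mn-s) := by ring
          _ ≤ ((mn.choose s : ℝ) * p^s) * 1 := this
          _ = (mn.choose s : ℝ) * p^s := by ring
    _ ≤ ((mn:ℝ)^s / s.factorial) * p^s := mul_le_mul_of_nonneg_right hC hpn
    _ ≤ _ := key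

lemma exp_neg_one_le_half : Real.exp (-1) ≤ 1/2 := by
  have h2 : (2:ℝ) ≤ Real.exp 1 := by
    have := Real.add_one_le_exp 1
    linarith
  rw [Real.exp_neg]
  rw [inv_le_comm₀ (Real.exp_pos 1) (by norm_num)]
  linarith

lemma four_exp_neg_sixteen_le_one : 4 * Real.exp (-(16:ℝ)) ≤ 1 := by
  have h2 : (17:ℝ) ≤ Real.exp 16 := by
    have := Real.add_one_le_exp (16:ℝ)
    linarith
  rw [Real.exp_neg]
  rw [mul_inv_le_iff₀ (Real.exp_pos _)]
  linarith

lemma rtail_le (mn : ℕ) (p : ℝ) (hp0 : 0 ≤ p) (hp1 : p ≤ 1) (t : ℕ) (ht : 1 ≤ t)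
    (β : ℝ) (hβ0 : 0 ≤ β) (hβhalf : β ≤ 1/2)
    (hβ : ∀ s : ℕ, t ≤ s → 4*((mn:ℝ)*p)/s ≤ β) :
    rProb mn p (fun f => t ≤ Xrow f) ≤ 2*β^t := by
  rw [rProb_ge_eq_sum]
  have hterm : ∀ s ∈ Finset.Icc t mn, rProb mn p (fun f => Xrow f = s) ≤ β^s := by
    intro s hst
    rw [Finset.mem_Icc] at hst
    have hs1 : 1 ≤ s := le_trans ht hst.1
    rw [rProb_eq_choose]
    calc (mn.choose s : ℝ) * (p ^ s * (1 - p) ^ (mn - s)) ≤ (4*((mn:ℝ)*p)/s)^s :=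
          choose_mul_le mn s p hs1 hp0 hp1
      _ ≤ β^s := by
          refine pow_le_pow_left₀ ?_ (hβ s hst.1) s
          have hsp : (0:ℝ) < (s:ℝ) := by exact_mod_cast hs1
          positivity
  calc ∑ s ∈ Finset.Icc t mn, rProb mn p (fun f => Xrow f = s)
      ≤ ∑ s ∈ Finset.Icc t mn, β^s := Finset.sum_le_sum hterm
    _ ≤ 2*β^t := by
        have := geom_tail_le β hβ0 hβhalf (t-1) mn
        have ht' : t - 1 + 1 = t := by omega
        rw [ht'] at this
        exact this

lemma key_upper (n mn : ℕ) (p L : ℝ)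
    (hp0 : 0 < p) (hp2 : p ≤ 1/2)
    (hR : 16 ≤ Real.log n)
    (hm2 : Real.log n + 2 ≤ (mn:ℝ))
    (hL : 16 ≤ L) (hL16 : L ≤ Real.log n / 16)
    (hexp : Real.exp L = Real.log n / ((mn:ℝ)*p)) :
    expMax n mn p ≤ 5 * (Real.log n / L) := by
  have hp1 : p ≤ 1 := by linarith
  have hp0' : (0:ℝ) ≤ p := hp0.le
  set R := Real.log n with hRdef
  set mp := (mn:ℝ)*p with hmpdef
  have hL0 : (0:ℝ) < L := by linarith
  have hR0 : (0:ℝ) < R := by linarith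
  have hmn0 : (0:ℝ) < (mn:ℝ) := by linarith
  have hmp0 : (0:ℝ) < mp := mul_pos hmn0 hp0
  set g := R / L with hgdef
  have hg0 : (0:ℝ) < g := div_pos hR0 hL0
  have hgL : g * L = R := div_mul_cancel₀ R (ne_of_gt hL0)
  have hg16 : 16 ≤ g := by
    rw [hgdef, le_div_iff₀ hL0]
    linarith
  have hmpR : mp * Real.exp L = R := by
    rw [hexp]
    field_simp
  have hn0 : (0:ℝ) < (n:ℝ) := by
    by_contra hc
    push_neg at hc
    have : (n:ℝ) = 0 := le_antisymm hc (Nat.cast_nonneg n)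
    rw [hRdef] at hR0
    rw [this, Real.log_zero] at hR0
    exact lt_irrefl 0 hR0
  have hnR : (n:ℝ) = Real.exp R := (Real.exp_log hn0).symm
  set K := ⌈4*g⌉₊ with hKdef
  have hK1 : 4*g ≤ (K:ℝ) := Nat.le_ceil _
  have hK2 : (K:ℝ) ≤ 4*g+1 := by
    have := Nat.ceil_lt_add_one (show (0:ℝ) ≤ 4*g by positivity)
    linarith
  set β := Real.exp (-(L/2)) with hβdef
  have hβ0 : (0:ℝ) < β := Real.exp_pos _
  have hβhalf : β ≤ 1/2 := by
    calc β ≤ Real.exp (-1) := by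
          refine Real.exp_le_exp.mpr ?_
          linarith
      _ ≤ 1/2 := exp_neg_one_le_half
  have hmpg : mp = R * Real.exp (-L) := by
    have hE : Real.exp L ≠ 0 := (Real.exp_pos L).ne'
    rw [Real.exp_neg]
    field_simp
    linarith [hmpR]
  have hβs : ∀ s : ℕ, K+1 ≤ s → 4*mp/s ≤ β := by
    intro s hs
    have hs0 : (0:ℝ) < (s:ℝ) := by
      have : 0 < s := by omega
      exact_mod_cast this
    have hsK : (K:ℝ)+1 ≤ (s:ℝ) := by exact_mod_cast hs
    have h4g : 4*g ≤ (s:ℝ) := by linarith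
    have step1 : 4*mp/s ≤ 4*mp/(4*g) := by
      refine div_le_div_of_nonneg_left (by positivity) (by positivity) h4g
    have step2 : 4*mp/(4*g) = L * Real.exp (-L) := by
      rw [hmpg]
      field_simp
      rw [← hgL]
      ring
    have step3 : L * Real.exp (-L) ≤ β := by
      have hLexp : L ≤ Real.exp (L/2) := le_exp_half L hL
      calc L * Real.exp (-L) ≤ Real.exp (L/2) * Real.exp (-L) :=
            mul_le_mul_of_nonneg_right hLexp (Real.exp_pos _).le
        _ = Real.exp (L/2 + -L) := (Real.exp_add _ _).symm
        _ = β := by rw [hβdef]; ring_nf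
    calc 4*mp/s ≤ 4*mp/(4*g) := step1
      _ = L * Real.exp (-L) := step2
      _ ≤ β := step3
  -- main estimate
  rw [expMax_eq_sum_tail]
  have hsub : Finset.Icc 1 mn ⊆ Finset.Icc 1 K ∪ Finset.Icc (K+1) mn := by
    intro t ht
    rw [Finset.mem_Icc] at ht
    rw [Finset.mem_union, Finset.mem_Icc, Finset.mem_Icc]
    omega
  have hdisj : Disjoint (Finset.Icc 1 K) (Finset.Icc (K+1) mn) := by
    rw [Finset.disjoint_left]
    intro t h1 h2
    rw [Finset.mem_Icc] at h1 h2
    omega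
  have hstep : ∑ t ∈ Finset.Icc 1 mn, bProb n mn p (fun ω => t ≤ maxX ω)
      ≤ ∑ t ∈ Finset.Icc 1 K, bProb n mn p (fun ω => t ≤ maxX ω)
        + ∑ t ∈ Finset.Icc (K+1) mn, bProb n mn p (fun ω => t ≤ maxX ω) := by
    rw [← Finset.sum_union hdisj]
    refine Finset.sum_le_sum_of_subset_of_nonneg hsub fun t _ _ =>
      bProb_nonneg hp0' hp1 _
  have hS1 : ∑ t ∈ Finset.Icc 1 K, bProb n mn p (fun ω => t ≤ maxX ω) ≤ (K:ℝ) := by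
    calc ∑ t ∈ Finset.Icc 1 K, bProb n mn p (fun ω => t ≤ maxX ω)
        ≤ ∑ _t ∈ Finset.Icc 1 K, (1:ℝ) := Finset.sum_le_sum fun t _ => bProb_le_one hp0' hp1 _
      _ = (K:ℝ) := by
          rw [Finset.sum_const, Nat.card_Icc]
          simp
  have hS2 : ∑ t ∈ Finset.Icc (K+1) mn, bProb n mn p (fun ω => t ≤ maxX ω) ≤ 1 := by
    have hterm : ∀ t ∈ Finset.Icc (K+1) mn,
        bProb n mn p (fun ω => t ≤ maxX ω) ≤ (n:ℝ) * (2*β^t) := by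
      intro t ht
      rw [Finset.mem_Icc] at ht
      have ht1 : 1 ≤ t := by omega
      have ht0 : 0 < t := ht1
      set r := rProb mn p (fun f => t ≤ Xrow f) with hrdef
      have hr0 : 0 ≤ r := rProb_nonneg hp0' hp1 _
      have hr1 : r ≤ 1 := rProb_le_one hp0' hp1 _
      have hcompl : rProb mn p (fun f => Xrow f < t) = 1 - r := by
        have h1 := rProb_add_compl (m := mn) (p := p) (fun f => t ≤ Xrow f)
        have h2 : rProb mn p (fun f => ¬ t ≤ Xrow f) = rProb mn p (fun f => Xrow f < t) :=
          rProb_congr fun f => not_le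
        rw [h2] at h1
        linarith
      have heq := prob_max_ge (n := n) (m := mn) (p := p) t ht0
      rw [hcompl] at heq
      have hbound : 1 - (1-r)^n ≤ (n:ℝ) * r := by
        have := one_sub_pow_le (1-r) (by linarith) (by linarith) n
        have hh : (1:ℝ) - (1-r) = r := by ring
        rw [hh] at this
        exact this
      have hrt : r ≤ 2*β^t := by
        rw [hrdef]
        refine rtail_le mn p hp0' hp1 t ht1 β hβ0.le hβhalf fun s hs => ?_
        exact hβs s (le_trans ht.1 hs)
      calc bProb n mn p (fun ω => t ≤ maxX ω) = 1 - (1-r)^n := heq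
        _ ≤ (n:ℝ) * r := hbound
        _ ≤ (n:ℝ) * (2*β^t) := mul_le_mul_of_nonneg_left hrt (Nat.cast_nonneg n)
    calc ∑ t ∈ Finset.Icc (K+1) mn, bProb n mn p (fun ω => t ≤ maxX ω)
        ≤ ∑ t ∈ Finset.Icc (K+1) mn, (n:ℝ) * (2*β^t) := Finset.sum_le_sum hterm
      _ = 2*(n:ℝ) * ∑ t ∈ Finset.Icc (K+1) mn, β^t := by
          rw [Finset.mul_sum]
          refine Finset.sum_congr rfl fun t _ => by ring
      _ ≤ 2*(n:ℝ) * (2*β^(K+1)) := by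
          refine mul_le_mul_of_nonneg_left (geom_tail_le β hβ0.le hβhalf K mn) (by positivity)
      _ = 4*(n:ℝ)*β^(K+1) := by ring
      _ ≤ 1 := by
          have hβpow : β^(K+1) = Real.exp (((K:ℝ)+1) * (-(L/2))) := by
            rw [hβdef, ← Real.exp_nat_mul]
            congr 1
            push_cast
            ring
          have hexple : ((K:ℝ)+1) * (-(L/2)) ≤ -(2*R) := by
            have h1 : 2*R ≤ ((K:ℝ)+1) * (L/2) := by
              have h2 : 4*g*(L/2) ≤ ((K:ℝ)+1)*(L/2) := by
                refine mul_le_mul_of_nonneg_right (by linarith) (by linarith)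
              have h3 : 4*g*(L/2) = 2*R := by
                rw [← hgL]; ring
              linarith
            linarith
          have hβR : β^(K+1) ≤ Real.exp (-(2*R)) := by
            rw [hβpow]
            exact Real.exp_le_exp.mpr hexple
          calc 4*(n:ℝ)*β^(K+1) ≤ 4*(n:ℝ)*Real.exp (-(2*R)) := by
                refine mul_le_mul_of_nonneg_left hβR (by positivity)
            _ = 4 * Real.exp (-R) := by
                rw [hnR, mul_assoc, ← Real.exp_add]
                congr 2
                ring
            _ ≤ 4 * Real.exp (-(16:ℝ)) := by
                refine mul_le_mul_of_nonneg_left (Real.exp_le_exp.mpr (by linarith)) (by norm_num)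
            _ ≤ 1 := four_exp_neg_sixteen_le_one
  calc ∑ t ∈ Finset.Icc 1 mn, bProb n mn p (fun ω => t ≤ maxX ω)
      ≤ (K:ℝ) + 1 := by linarith
    _ ≤ 4*g + 2 := by linarith
    _ ≤ 5 * g := by linarith

set_option maxHeartbeats 1000000 in
lemma key_lower (n mn : ℕ) (p L : ℝ)
    (hp0 : 0 < p) (hp2 : p ≤ 1/2)
    (hR : 16 ≤ Real.log n)
    (hm2 : Real.log n + 2 ≤ (mn:ℝ))
    (hL : 16 ≤ L) (hL16 : L ≤ Real.log n / 16)
    (hmp16 : (mn:ℝ)*p ≤ Real.log n / 16)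
    (hexp : Real.exp L = Real.log n / ((mn:ℝ)*p)) :
    (1/8) * (Real.log n / L) ≤ expMax n mn p := by
  have hp1 : p ≤ 1 := by linarith
  have hp0' : (0:ℝ) ≤ p := hp0.le
  set R := Real.log n with hRdef
  set mp := (mn:ℝ)*p with hmpdef
  have hL0 : (0:ℝ) < L := by linarith
  have hR0 : (0:ℝ) < R := by linarith
  have hmn0 : (0:ℝ) < (mn:ℝ) := by linarith
  have hmp0 : (0:ℝ) < mp := mul_pos hmn0 hp0
  set g := R / L with hgdef
  have hg0 : (0:ℝ) < g := div_pos hR0 hL0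
  have hgL : g * L = R := div_mul_cancel₀ R (ne_of_gt hL0)
  have hg16 : 16 ≤ g := by
    rw [hgdef, le_div_iff₀ hL0]
    linarith
  have hmpR : mp * Real.exp L = R := by
    rw [hexp]
    field_simp
  have hmpg : mp = R * Real.exp (-L) := by
    have hE : Real.exp L ≠ 0 := (Real.exp_pos L).ne'
    rw [Real.exp_neg]
    field_simp
    linarith [hmpR]
  have hn0 : (0:ℝ) < (n:ℝ) := by
    by_contra hc
    push_neg at hc
    have hz : (n:ℝ) = 0 := le_antisymm hc (Nat.cast_nonneg n)
    rw [hRdef] at hR0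
    rw [hz, Real.log_zero] at hR0
    exact lt_irrefl 0 hR0
  have hnR : (n:ℝ) = Real.exp R := (Real.exp_log hn0).symm
  set k := ⌈g/4⌉₊ with hkdef
  have hk1 : g/4 ≤ (k:ℝ) := Nat.le_ceil _
  have hk2 : (k:ℝ) ≤ g/4+1 := by
    have := Nat.ceil_lt_add_one (show (0:ℝ) ≤ g/4 by positivity)
    linarith
  have hk0 : 0 < k := by
    rw [hkdef]
    rw [Nat.ceil_pos]
    positivity
  have h2k : 2*(k:ℝ) ≤ g := by linarith
  have hgR : g ≤ R := by
    rw [hgdef]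
    refine div_le_self hR0.le (by linarith)
  have hkmn2 : 2*(k:ℝ) ≤ (mn:ℝ) := by linarith
  have hkmn : k ≤ mn := by
    have : (k:ℝ) ≤ (mn:ℝ) := by linarith
    exact_mod_cast this
  set q := (mn.choose k : ℝ) * (p^k * (1-p)^(mn-k)) with hqdef
  set r := rProb mn p (fun f => k ≤ Xrow f) with hrdef
  have hr0 : 0 ≤ r := rProb_nonneg hp0' hp1 _
  have hr1 : r ≤ 1 := rProb_le_one hp0' hp1 _
  have hqr : q ≤ r := by
    rw [hrdef, rProb_ge_eq_sum]
    have hmem : k ∈ Finset.Icc k mn := Finset.mem_Icc.mpr ⟨le_refl k, hkmn⟩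
    have hs := Finset.single_le_sum (f := fun t => rProb mn p (fun f => Xrow f = t))
      (fun t _ => rProb_nonneg hp0' hp1 _) hmem
    have h7 : (fun t => rProb mn p (fun f => Xrow f = t)) k = q := by
      simp only []
      rw [rProb_eq_choose]
    exact (le_of_eq h7.symm).trans hs
  -- lower bound q
  have hkR : (0:ℝ) < (k:ℝ) := by exact_mod_cast hk0
  have hchoose : ((mn:ℝ)/2)^k / (k:ℝ)^k ≤ (mn.choose k : ℝ) := by
    have h1 : (((mn + 1 - k : ℕ):ℝ))^k / (k.factorial : ℝ) ≤ (mn.choose k : ℝ) :=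
      Nat.pow_le_choose k mn
    have h2 : ((mn:ℝ)/2) ≤ ((mn + 1 - k : ℕ):ℝ) := by
      have hcast : ((mn + 1 - k : ℕ):ℝ) = (mn:ℝ) + 1 - (k:ℝ) := by
        push_cast [Nat.cast_sub (by omega : k ≤ mn + 1)]
        ring
      rw [hcast]
      linarith
    have h3 : ((mn:ℝ)/2)^k ≤ (((mn + 1 - k : ℕ):ℝ))^k :=
      pow_le_pow_left₀ (by positivity) h2 k
    have h4 : (k.factorial : ℝ) ≤ (k:ℝ)^k := by
      exact_mod_cast Nat.factorial_le_pow k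
    have h5 : ((mn:ℝ)/2)^k / (k:ℝ)^k ≤ ((mn:ℝ)/2)^k / (k.factorial : ℝ) := by
      refine div_le_div_of_nonneg_left (by positivity) (by exact_mod_cast k.factorial_pos) h4
    calc ((mn:ℝ)/2)^k / (k:ℝ)^k ≤ ((mn:ℝ)/2)^k / (k.factorial : ℝ) := h5
      _ ≤ (((mn + 1 - k : ℕ):ℝ))^k / (k.factorial : ℝ) := by
          gcongr
          try exact h2
      _ ≤ (mn.choose k : ℝ) := h1
  have hbase : Real.exp (-L) ≤ mp/(2*(k:ℝ)) := by
    have h1 : mp/g ≤ mp/(2*(k:ℝ)) := by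
      refine div_le_div_of_nonneg_left hmp0.le (by positivity) h2k
    have h2 : mp/g = L * Real.exp (-L) := by
      rw [hmpg]
      field_simp
      rw [← hgL]
      ring
    have h3 : Real.exp (-L) ≤ L * Real.exp (-L) := by
      nlinarith [Real.exp_pos (-L)]
    linarith
  have hq_low : Real.exp (-((k:ℝ)*L) - 2*mp) ≤ q := by
    have hA : (mp/(2*(k:ℝ)))^k = ((mn:ℝ)/2)^k / (k:ℝ)^k * p^k := by
      have hb : mp/(2*(k:ℝ)) = ((mn:ℝ)/2)/(k:ℝ) * p := by
        rw [hmpdef]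
        field_simp
        try ring
      rw [hb]
      rw [mul_pow]
      try rw [div_pow]
    have hstep1 : Real.exp (-((k:ℝ)*L)) ≤ ((mn:ℝ)/2)^k / (k:ℝ)^k * p^k := by
      rw [← hA]
      calc Real.exp (-((k:ℝ)*L)) = (Real.exp (-L))^k := by
            rw [← Real.exp_nat_mul]
            congr 1
            ring
        _ ≤ (mp/(2*(k:ℝ)))^k := pow_le_pow_left₀ (Real.exp_pos _).le hbase k
    have hstep2 : Real.exp (-(2*mp)) ≤ (1-p)^(mn-k) := by
      calc Real.exp (-(2*mp)) = (Real.exp (-(2*p)))^mn := by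
            rw [← Real.exp_nat_mul]
            congr 1
            rw [hmpdef]
            ring
        _ ≤ (1-p)^mn := pow_le_pow_left₀ (Real.exp_pos _).le (exp_neg_two_le_one_sub p hp0' hp2) mn
        _ ≤ (1-p)^(mn-k) := pow_le_pow_of_le_one (by linarith) (by linarith) (by omega)
    have hccast : (0:ℝ) ≤ ((mn:ℝ)/2)^k / (k:ℝ)^k := by positivity
    have hbnn : (0:ℝ) ≤ ((mn:ℝ)/2)^k / (k:ℝ)^k * p^k :=
      mul_nonneg (by positivity) (pow_nonneg hp0' k)
    calc Real.exp (-((k:ℝ)*L) - 2*mp) = Real.exp (-((k:ℝ)*L)) * Real.exp (-(2*mp)) := by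
          rw [← Real.exp_add]
          try congr 1
          try ring
      _ ≤ (((mn:ℝ)/2)^k / (k:ℝ)^k * p^k) * (1-p)^(mn-k) :=
          mul_le_mul hstep1 hstep2 (Real.exp_pos _).le hbnn
      _ ≤ (mn.choose k : ℝ) * (p^k * (1-p)^(mn-k)) := by
          have hpk : (0:ℝ) ≤ p^k := pow_nonneg hp0' k
          have h1pk : (0:ℝ) ≤ (1-p)^(mn-k) := pow_nonneg (by linarith) _
          calc (((mn:ℝ)/2)^k / (k:ℝ)^k * p^k) * (1-p)^(mn-k)
              = (((mn:ℝ)/2)^k / (k:ℝ)^k) * (p^k * (1-p)^(mn-k)) := by ring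
            _ ≤ (mn.choose k : ℝ) * (p^k * (1-p)^(mn-k)) := by
                refine mul_le_mul_of_nonneg_right hchoose (by positivity)
      _ = q := rfl
  -- exponent bound: k*L + 2*mp ≤ (5/8)*R
  have hexps : (k:ℝ)*L + 2*mp ≤ (5/8)*R := by
    have h1 : (k:ℝ)*L ≤ (g/4+1)*L := mul_le_mul_of_nonneg_right hk2 hL0.le
    have h2 : (g/4+1)*L = R/4 + L := by
      rw [← hgL]
      ring
    have h3 : L ≤ R/16 := hL16
    have h4 : 2*mp ≤ R/8 := by linarith
    linarith
  have hq1 : Real.exp (-((5/8)*R)) ≤ q := by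
    refine le_trans (Real.exp_le_exp.mpr ?_) hq_low
    linarith
  have hnq : 1 ≤ (n:ℝ) * q := by
    calc (1:ℝ) = Real.exp 0 := Real.exp_zero.symm
      _ ≤ Real.exp ((3/8)*R) := Real.exp_le_exp.mpr (by linarith)
      _ = Real.exp R * Real.exp (-((5/8)*R)) := by
          rw [← Real.exp_add]
          congr 1
          ring
      _ ≤ (n:ℝ) * q := by
          rw [hnR]
          exact mul_le_mul_of_nonneg_left hq1 (Real.exp_pos _).le
  have hq0 : 0 < q := lt_of_lt_of_le (Real.exp_pos _) hq1
  have hq1' : q ≤ 1 := le_trans hqr hr1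
  -- probability that max exceeds k is at least 1/2
  have hcompl : rProb mn p (fun f => Xrow f < k) = 1 - r := by
    have h1 : r + rProb mn p (fun f => ¬ k ≤ Xrow f) = 1 :=
      rProb_add_compl (m := mn) (p := p) (fun f => k ≤ Xrow f)
    have h2 : rProb mn p (fun f => ¬ k ≤ Xrow f) = rProb mn p (fun f => Xrow f < k) :=
      rProb_congr fun f => not_le
    rw [h2] at h1
    linarith
  have hmax : (1:ℝ)/2 ≤ bProb n mn p (fun ω => k ≤ maxX ω) := by
    have heq := prob_max_ge (n := n) (m := mn) (p := p) k hk0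
    rw [hcompl] at heq
    have hpow : (1-r)^n ≤ 1/2 := by
      have hstep : (1-r)^n ≤ Real.exp (-q)^n := by
        refine pow_le_pow_left₀ (by linarith) ?_ n
        calc 1 - r ≤ 1 - q := by linarith
          _ ≤ Real.exp (-q) := one_sub_le_exp_neg q
      have hstep2 : Real.exp (-q)^n = Real.exp ((n:ℝ) * (-q)) := (Real.exp_nat_mul (-q) n).symm
      calc (1-r)^n ≤ Real.exp ((n:ℝ) * (-q)) := by rw [← hstep2]; exact hstep
        _ ≤ Real.exp (-1) := by
            refine Real.exp_le_exp.mpr ?_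
            nlinarith
        _ ≤ 1/2 := exp_neg_one_le_half
    rw [heq]
    linarith
  have hfinal := le_expMax (n := n) (m := mn) (p := p) hp0' hp1 k
  have hkb : (k:ℝ) * (1/2) ≤ (k:ℝ) * bProb n mn p (fun ω => k ≤ maxX ω) :=
    mul_le_mul_of_nonneg_left hmax hkR.le
  linarith

end Stmt10P

open Filter

/-- In the sparse regime (`mp / log n → 0`, with
`log(log n/(mp)) / log n → 0`), setting `g_n = log n / log(log n/(mp))`, the expected
maximum of `n` i.i.d. Binomial(m,p) variables satisfies `c₁ g_n ≤ E[max_i X_i] ≤ c₂ g_n`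
for large `n`. -/
theorem stmt10 (m : ℕ → ℕ) (p : ℕ → ℝ) (δ : ℝ)
    (hδ : 0 < δ ∧ δ < 1)
    (hp0 : ∀ n, 0 < p n ∧ p n ≤ 1)
    (hm : ∃ c C : ℝ, 0 < c ∧ 0 < C ∧ ∃ N : ℕ, ∀ n ≥ N,
      c * (n : ℝ) ^ c ≤ (m n : ℝ) ∧ (m n : ℝ) ≤ C * (n : ℝ) ^ C)
    (hp : ∃ N : ℕ, ∀ n ≥ N, (n : ℝ) ^ (-δ) ≤ p n ∧ p n ≤ 1 / 2)
    (hsparse : Tendsto (fun n : ℕ => (m n : ℝ) * p n / Real.log n) atTop (nhds 0))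
    (hlog : Tendsto (fun n : ℕ => Real.log (Real.log n / ((m n : ℝ) * p n)) / Real.log n)
      atTop (nhds 0)) :
    ∃ c₁ c₂ : ℝ, 0 < c₁ ∧ 0 < c₂ ∧ ∃ N : ℕ, ∀ n ≥ N,
      c₁ * (Real.log n / Real.log (Real.log n / ((m n : ℝ) * p n))) ≤ expMax n (m n) (p n) ∧
      expMax n (m n) (p n) ≤
        c₂ * (Real.log n / Real.log (Real.log n / ((m n : ℝ) * p n))) := by
  classical
  obtain ⟨Np, hNp⟩ := hp
  have E1 : ∀ᶠ n : ℕ in atTop, 0 < p n ∧ p n ≤ 1/2 :=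
    Filter.eventually_atTop.mpr ⟨Np, fun n hn => ⟨(hp0 n).1, (hNp n hn).2⟩⟩
  have hlogtop : Tendsto (fun n : ℕ => Real.log n) atTop atTop :=
    Real.tendsto_log_atTop.comp tendsto_natCast_atTop_atTop
  have E3 : ∀ᶠ n : ℕ in atTop, 16 ≤ Real.log n := hlogtop.eventually_ge_atTop 16
  obtain ⟨c, C, hc, hC, Nm, hNm⟩ := hm
  have hrpow : Tendsto (fun n : ℕ => (n:ℝ) ^ c) atTop atTop :=
    (tendsto_rpow_atTop hc).comp tendsto_natCast_atTop_atTop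
  have hlo : ∀ᶠ x : ℝ in atTop, ‖Real.log x‖ ≤ c/2 * ‖x ^ c‖ :=
    (isLittleO_log_rpow_atTop hc).def (by linarith)
  have hloN : ∀ᶠ n : ℕ in atTop, ‖Real.log n‖ ≤ c/2 * ‖(n:ℝ) ^ c‖ :=
    tendsto_natCast_atTop_atTop.eventually hlo
  have h2le : ∀ᶠ n : ℕ in atTop, 2 ≤ c/2 * (n:ℝ) ^ c :=
    (hrpow.const_mul_atTop (by linarith : (0:ℝ) < c/2)).eventually_ge_atTop 2
  have E2 : ∀ᶠ n : ℕ in atTop, Real.log n + 2 ≤ (m n : ℝ) := by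
    filter_upwards [hloN, h2le, Filter.eventually_ge_atTop Nm] with n hn1 hn2 hn3
    have hpow_nn : (0:ℝ) ≤ (n:ℝ) ^ c := Real.rpow_nonneg (Nat.cast_nonneg n) c
    have h4 : Real.log n ≤ c/2 * (n:ℝ) ^ c := by
      calc Real.log n ≤ ‖Real.log n‖ := le_abs_self _
        _ ≤ c/2 * ‖(n:ℝ) ^ c‖ := hn1
        _ = c/2 * (n:ℝ) ^ c := by rw [Real.norm_eq_abs, abs_of_nonneg hpow_nn]
    have h5 := (hNm n hn3).1
    have : Real.log n + 2 ≤ c * (n:ℝ) ^ c := by linarith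
    linarith
  have hmppos : ∀ᶠ n : ℕ in atTop, 0 < (m n : ℝ) * p n := by
    filter_upwards [E2, E3] with n h2 h3
    exact mul_pos (by linarith) (hp0 n).1
  have hratio_pos : ∀ᶠ n : ℕ in atTop, (m n : ℝ) * p n / Real.log n ∈ Set.Ioi (0:ℝ) := by
    filter_upwards [hmppos, E3] with n h1 h3
    exact Set.mem_Ioi.mpr (div_pos h1 (by linarith))
  have hinner : Tendsto (fun n : ℕ => Real.log n / ((m n : ℝ) * p n)) atTop atTop := by
    have h1 : Tendsto (fun n : ℕ => (m n : ℝ) * p n / Real.log n) atTop (nhdsWithin 0 (Set.Ioi 0)) :=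
      tendsto_nhdsWithin_iff.mpr ⟨hsparse, hratio_pos⟩
    have h2 := h1.inv_tendsto_nhdsGT_zero
    refine h2.congr' ?_
    filter_upwards [hmppos, E3] with n hm0 h3
    show ((m n : ℝ) * p n / Real.log n)⁻¹ = Real.log n / ((m n : ℝ) * p n)
    rw [inv_div]
  have hLtop : Tendsto (fun n : ℕ => Real.log (Real.log n / ((m n : ℝ) * p n))) atTop atTop :=
    Real.tendsto_log_atTop.comp hinner
  have E4 : ∀ᶠ n : ℕ in atTop, 16 ≤ Real.log (Real.log n / ((m n : ℝ) * p n)) :=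
    hLtop.eventually_ge_atTop 16
  have E5 : ∀ᶠ n : ℕ in atTop,
      Real.log (Real.log n / ((m n : ℝ) * p n)) ≤ Real.log n / 16 := by
    have h1 := hlog.eventually_le_const (show (0:ℝ) < 1/16 by norm_num)
    filter_upwards [h1, E3] with n hn1 hn3
    have hlp : (0:ℝ) < Real.log n := by linarith
    rw [div_le_iff₀ hlp] at hn1
    linarith
  have E6 : ∀ᶠ n : ℕ in atTop, (m n : ℝ) * p n ≤ Real.log n / 16 := by
    have h1 := hsparse.eventually_le_const (show (0:ℝ) < 1/16 by norm_num)
    filter_upwards [h1, E3] with n hn1 hn3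
    have hlp : (0:ℝ) < Real.log n := by linarith
    rw [div_le_iff₀ hlp] at hn1
    linarith
  have E7 : ∀ᶠ n : ℕ in atTop,
      Real.exp (Real.log (Real.log n / ((m n : ℝ) * p n)))
        = Real.log n / ((m n : ℝ) * p n) := by
    filter_upwards [hmppos, E3] with n h1 h3
    exact Real.exp_log (div_pos (by linarith) h1)
  have ALL := E1.and (E2.and (E3.and (E4.and (E5.and (E6.and E7)))))
  obtain ⟨N, hN⟩ := Filter.eventually_atTop.mp ALL
  refine ⟨1/8, 5, by norm_num, by norm_num, N, fun n hn => ?_⟩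
  obtain ⟨⟨hp0n, hp2n⟩, h2, h3, h4, h5, h6, h7⟩ := hN n hn
  exact ⟨Stmt10P.key_lower n (m n) (p n) _ hp0n hp2n h3 h2 h4 h5 h6 h7,
    Stmt10P.key_upper n (m n) (p n) _ hp0n hp2n h3 h2 h4 h5 h7⟩
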